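/- For the genus-g curve X, with [X] = 1 + h¹(X) + L in the completed Grothendieck ring of varieties, and P_X(x) = Σ_{i=0}^{2g} λ^i(h¹(X)) x^i the motivic Poincaré polynomial, one has for every n ≥ 0: λ^n([X]) = coeff_{x^0} P_X(x) / ((1−x)(1−Lx)x^n), i.e. the class [Sym^n X] of the n-th symmetric power equals the coefficient of x^n in the motivic zeta function Z(X,x) = P_X(x)/((1−x)(1−Lx)). -/

import Mathlib

/-!
STATEMENT 15. The motivic class of symmetric powers of the curve from the
motivic zeta function: `λ^n([X]) = [Sym^n X]` equals the coefficient of `x^n`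
in `Z(X,x) = P_X(x) / ((1-x)(1-𝕃x))`.

The completed Grothendieck ring is modeled by a commutative ring `R` with
`𝕃` and `h1 = h¹(X)`, and `λ`-operations `lam` satisfying the context facts:
`λ⁰ = 1`, the addition formula, `λⁿ(1) = 1`, `λⁿ(𝕃) = 𝕃ⁿ`, the functional
equation `𝕃^g λⁿ(h¹) = 𝕃ⁿ λ^{2g-n}(h¹)` for `n ≤ 2g`, and vanishing for
`n > 2g`.  The series `(1-x)⁻¹ = Σ xᵏ` and `(1-𝕃x)⁻¹ = Σ 𝕃ᵏ xᵏ` are written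
out explicitly as power series over `R`, and `P_X(x) = Σ_{i≤2g} λ^i(h¹) x^i`.
-/
theorem symmetric_power_motive_from_zeta
    {R : Type*} [CommRing R]
    (𝕃 h1 clsX : R) (lam : ℕ → R → R) (g : ℕ)
    (hX : clsX = 1 + h1 + 𝕃)
    (hlam0 : ∀ a : R, lam 0 a = 1)
    (hadd : ∀ (n : ℕ) (a b : R),
        lam n (a + b) = ∑ p ∈ Finset.HasAntidiagonal.antidiagonal n, lam p.1 a * lam p.2 b)
    (hone : ∀ n : ℕ, lam n (1 : R) = 1)
    (hL : ∀ n : ℕ, lam n 𝕃 = 𝕃 ^ n)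
    (hfun : ∀ n : ℕ, n ≤ 2 * g → 𝕃 ^ g * lam n h1 = 𝕃 ^ n * lam (2 * g - n) h1)
    (hvan : ∀ n : ℕ, 2 * g < n → lam n h1 = 0) :
    ∀ n : ℕ, lam n clsX
      = PowerSeries.coeff n
          ((PowerSeries.mk fun i => if i ≤ 2 * g then lam i h1 else 0)
            * (PowerSeries.mk fun _ => (1 : R))
            * (PowerSeries.mk fun j => 𝕃 ^ j)) := by
  intro n
  rw [hX, hadd, PowerSeries.coeff_mul]
  apply Finset.sum_congr rfl
  intro p hp
  rw [hadd, hL, PowerSeries.coeff_mul]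
  simp only [PowerSeries.coeff_mk]
  congr 1
  rw [Finset.Nat.sum_antidiagonal_eq_sum_range_succ_mk,
      Finset.Nat.sum_antidiagonal_eq_sum_range_succ_mk,
      ← Finset.sum_range_reflect (fun i => (if i ≤ 2 * g then lam i h1 else 0) * 1)]
  apply Finset.sum_congr rfl
  intro i hi
  simp only [Nat.succ_sub_one]
  rw [hone, one_mul, mul_one]
  by_cases h : p.1 - i ≤ 2 * g
  · rw [if_pos h]
  · rw [if_neg h, hvan _ (lt_of_not_ge h)]
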